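/- Every T-alternating one-species mass-action network admits, for some choice of positive rate constants, exactly T nondegenerate positive steady states (simple positive roots of the ODE polynomial); moreover ⌈T/2⌉ of them are exponentially stable (the derivative of the ODE polynomial is negative there) when the arrow diagram starts with →, and ⌊T/2⌋ are exponentially stable when it starts with ←. -/

import Mathlib

open Finset Filter Topology

namespace AltAux

lemma sum_continuous {k : ℕ} (e : Fin k → ℕ) (a : Fin k → ℝ) :
    Continuous fun t : ℝ => ∑ j, a j * t ^ e j := by
  continuity

lemma sum_hasDerivAt {k : ℕ} (e : Fin k → ℕ) (a : Fin k → ℝ) (t : ℝ) :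
    HasDerivAt (fun t : ℝ => ∑ j, a j * t ^ e j)
      (∑ j, a j * ((e j : ℝ) * t ^ (e j - 1))) t := by
  refine HasDerivAt.fun_sum fun j _ => ?_
  simpa using (hasDerivAt_pow (e j) t).const_mul (a j)

lemma f_eq_pow_mul_g {k : ℕ} (e : Fin k → ℕ) (a : Fin k → ℝ) (e₀ : ℕ)
    (he : ∀ j, e₀ ≤ e j) (t : ℝ) :
    (∑ j, a j * t ^ e j) = t ^ e₀ * ∑ j, a j * t ^ (e j - e₀) := by
  rw [Finset.mul_sum]
  refine Finset.sum_congr rfl fun j _ => ?_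
  rw [mul_comm (t ^ e₀), mul_assoc, ← pow_add, Nat.sub_add_cancel (he j)]

lemma g_hasDerivAt {k : ℕ} (e : Fin (k + 1) → ℕ) (a : Fin (k + 1) → ℝ) (t : ℝ) :
    HasDerivAt (fun t : ℝ => ∑ j, a j * t ^ (e j - e 0))
      (∑ j : Fin k, (a j.succ * ((e j.succ - e 0 : ℕ) : ℝ)) * t ^ (e j.succ - e 0 - 1)) t := by
  have h := sum_hasDerivAt (fun j => e j - e 0) a t
  convert h using 1
  rw [Fin.sum_univ_succ]
  simp only [Nat.sub_self, pow_zero, Nat.cast_zero, zero_mul, mul_zero, zero_add]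
  refine Finset.sum_congr rfl fun j _ => ?_
  ring


/-- at most k distinct positive roots for k+1 nonzero monomials -/
lemma no_roots : ∀ (k : ℕ) (e : Fin (k + 1) → ℕ) (a : Fin (k + 1) → ℝ),
    StrictMono e → (∀ i, a i ≠ 0) →
    ∀ x : Fin (k + 1) → ℝ, StrictMono x → (∀ i, 0 < x i) →
    (∀ i, ∑ j, a j * x i ^ e j = 0) → False := by
  intro k
  induction k with
  | zero =>
    intro e a _ ha x _ hxpos hroot
    have h := hroot 0
    rw [Fin.sum_univ_one] at h
    exact (mul_ne_zero (ha 0) (pow_ne_zero _ (ne_of_gt (hxpos 0)))) h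
  | succ k ih =>
    intro e a he ha x hx hxpos hroot
    set g : ℝ → ℝ := fun t => ∑ j, a j * t ^ (e j - e 0) with hg
    set h : ℝ → ℝ := fun t =>
      ∑ j : Fin (k + 1), (a j.succ * ((e j.succ - e 0 : ℕ) : ℝ)) * t ^ (e j.succ - e 0 - 1) with hh
    have hgroot : ∀ i, g (x i) = 0 := by
      intro i
      have := hroot i
      rw [f_eq_pow_mul_g e a (e 0) (fun j => he.monotone (Fin.zero_le j)) (x i)] at this
      have hxne : (x i) ^ e 0 ≠ 0 := pow_ne_zero _ (ne_of_gt (hxpos i))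
      exact (mul_eq_zero.1 this).resolve_left hxne
    have hgd : ∀ t, HasDerivAt g (h t) t := fun t => g_hasDerivAt e a t
    -- Rolle roots
    have hroll : ∀ i : Fin (k + 1), ∃ y ∈ Set.Ioo (x i.castSucc) (x i.succ), h y = 0 := by
      intro i
      have hlt : x i.castSucc < x i.succ := hx (Fin.castSucc_lt_succ : i.castSucc < i.succ)
      obtain ⟨c, hc, hc0⟩ := exists_deriv_eq_zero hlt
        ((sum_continuous _ a).continuousOn)
        ((hgroot i.castSucc).trans (hgroot i.succ).symm)
      refine ⟨c, hc, ?_⟩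
      rw [← (hgd c).deriv]; exact hc0
    choose y hy hy0 using hroll
    have hymono : StrictMono y := by
      intro i j hij
      calc y i < x i.succ := (hy i).2
        _ ≤ x j.castSucc := hx.monotone (by
            simp only [Fin.le_def, Fin.val_succ, Fin.coe_castSucc]
            exact hij)
        _ < y j := (hy j).1
    have hypos : ∀ i, 0 < y i := fun i => lt_trans (hxpos _) (hy i).1
    refine ih (fun j => e j.succ - e 0 - 1) (fun j => a j.succ * ((e j.succ - e 0 : ℕ) : ℝ))
      ?_ ?_ y hymono hypos ?_
    · intro i j hij
      show e i.succ - e 0 - 1 < e j.succ - e 0 - 1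
      have h1 : e 0 < e i.succ := he (Fin.succ_pos i)
      have h2 : e i.succ < e j.succ := he (by simpa using hij)
      omega
    · intro i
      refine mul_ne_zero (ha _) (Nat.cast_ne_zero.mpr ?_)
      have : e 0 < e i.succ := he (Fin.succ_pos i)
      omega
    · intro i
      exact hy0 i

lemma no_roots' (k : ℕ) (e : Fin (k + 1) → ℕ) (a : Fin (k + 1) → ℝ)
    (he : StrictMono e) (ha : ∀ i, a i ≠ 0)
    (x : Fin (k + 1) → ℝ) (hx : Function.Injective x) (hxpos : ∀ i, 0 < x i)
    (hroot : ∀ i, ∑ j, a j * x i ^ e j = 0) : False := by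
  refine no_roots k e a he ha (x ∘ Tuple.sort x)
    ((Tuple.monotone_sort x).strictMono_of_injective
      (hx.comp (Tuple.sort x).injective))
    (fun i => hxpos _) (fun i => hroot _)


/-- choose positive coefficients and alternating-sign sample points -/
lemma construct (σ : ℝ) (hσ : σ = 1 ∨ σ = -1) :
    ∀ (T : ℕ) (e : Fin (T + 1) → ℕ), StrictMono e →
    ∃ c : Fin (T + 1) → ℝ, (∀ i, 0 < c i) ∧
    ∃ w : Fin (T + 1) → ℝ, StrictMono w ∧ (∀ j, 0 < w j) ∧
    ∀ j : Fin (T + 1), 0 < (σ * (-1) ^ (j : ℕ)) *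
      ∑ i : Fin (T + 1), (σ * (-1) ^ (i : ℕ) * c i) * w j ^ e i := by
  have hσ2 : σ * σ = 1 := by rcases hσ with h | h <;> rw [h] <;> norm_num
  have hApm : ∀ k : ℕ, σ * (-1 : ℝ) ^ k = 1 ∨ σ * (-1 : ℝ) ^ k = -1 := by
    intro k
    have h2 : ((-1 : ℝ)) ^ k = 1 ∨ ((-1 : ℝ)) ^ k = -1 :=
      (Nat.even_or_odd k).imp (fun h => h.neg_one_pow) (fun h => h.neg_one_pow)
    rcases hσ with h | h <;> rcases h2 with h2 | h2 <;> rw [h, h2] <;> norm_num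
  intro T
  induction T with
  | zero =>
    intro e _
    refine ⟨fun _ => 1, fun _ => one_pos, fun _ => 1,
      fun a b hab => absurd (Fin.lt_def.mp hab)
        (by have := a.isLt; have := b.isLt; omega),
      fun _ => one_pos, fun j => ?_⟩
    have h0 : ∀ j : Fin 1, (j : ℕ) = 0 := by decide
    rw [Fin.sum_univ_one, h0 j, h0 0]
    simp [hσ2]
  | succ T ih =>
    intro e he
    obtain ⟨c, hc, w, hw, hwpos, hsign⟩ :=
      ih (fun i => e i.castSucc) (fun i j hij => he (by simpa using hij))
    set f : ℝ → ℝ := fun t =>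
      ∑ i : Fin (T + 1), (σ * (-1) ^ (i : ℕ) * c i) * t ^ e i.castSucc with hf
    have hne : (univ : Finset (Fin (T + 1))).Nonempty := ⟨0, mem_univ 0⟩
    set ε : ℝ := univ.inf' hne fun j : Fin (T + 1) => (σ * (-1) ^ (j : ℕ)) * f (w j) with hε
    have hεpos : 0 < ε := by
      rw [hε, Finset.lt_inf'_iff]
      exact fun j _ => hsign j
    have hεle : ∀ j : Fin (T + 1), ε ≤ (σ * (-1) ^ (j : ℕ)) * f (w j) :=
      fun j => Finset.inf'_le (fun j : Fin (T + 1) => (σ * (-1) ^ (j : ℕ)) * f (w j)) (mem_univ j)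
    set P : ℕ := e (Fin.last (T + 1)) with hP
    set M : ℝ := univ.sup' hne fun j : Fin (T + 1) => w j ^ P with hM
    have hMle : ∀ j : Fin (T + 1), w j ^ P ≤ M := fun j => Finset.le_sup' (fun j : Fin (T + 1) => w j ^ P) (mem_univ j)
    have hMpos : 0 < M := lt_of_lt_of_le (pow_pos (hwpos 0) P) (hMle 0)
    set δ : ℝ := ε / (2 * M) with hδ
    have hδpos : 0 < δ := div_pos hεpos (by linarith)
    have hδM : δ * M = ε / 2 := by
      rw [hδ]; field_simp
    set S : ℝ := ∑ i : Fin (T + 1), c i with hS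
    set eT : ℕ := e (Fin.last T).castSucc with heT
    set R : ℝ := max (w (Fin.last T) + 1) (max 1 (S / δ + 1)) with hR
    have hR1 : (1 : ℝ) ≤ R := le_trans (le_max_left _ _) (le_max_right _ _)
    have hR0 : 0 < R := lt_of_lt_of_le one_pos hR1
    have hRw : w (Fin.last T) < R :=
      lt_of_lt_of_le (lt_add_one _) (le_max_left _ _)
    have hRS : S / δ < R :=
      lt_of_lt_of_le (lt_add_one _) (le_trans (le_max_right _ _) (le_max_right _ _))
    have heTP : eT + 1 ≤ P := he (Fin.castSucc_lt_last _)
    refine ⟨Fin.snoc c δ, ?_, Fin.snoc w R, ?_, ?_, ?_⟩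
    · intro i
      refine Fin.lastCases ?_ ?_ i
      · rw [Fin.snoc_last]; exact hδpos
      · intro j; rw [Fin.snoc_castSucc]; exact hc j
    · rw [Fin.strictMono_iff_lt_succ]
      intro i
      refine Fin.lastCases ?_ ?_ i
      · rw [Fin.succ_last, Fin.snoc_last, Fin.snoc_castSucc]
        exact hRw
      · intro j
        rw [Fin.succ_castSucc, Fin.snoc_castSucc, Fin.snoc_castSucc]
        exact hw (Fin.castSucc_lt_succ : j.castSucc < j.succ)
    · intro j
      refine Fin.lastCases ?_ ?_ j
      · rw [Fin.snoc_last]; exact hR0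
      · intro i; rw [Fin.snoc_castSucc]; exact hwpos i
    · -- the sign conditions
      have hsum : ∀ t : ℝ,
          (∑ i : Fin (T + 2), (σ * (-1) ^ (i : ℕ) * (Fin.snoc c δ : Fin (T + 2) → ℝ) i) * t ^ e i)
          = f t + (σ * (-1) ^ (T + 1) * δ) * t ^ P := by
        intro t
        rw [Fin.sum_univ_castSucc]
        congr 1
        · refine Finset.sum_congr rfl fun i _ => ?_
          rw [Fin.snoc_castSucc, Fin.coe_castSucc]
        · rw [Fin.snoc_last, Fin.val_last, hP]
      intro j
      refine Fin.lastCases ?_ ?_ j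
      · -- new point R
        rw [Fin.snoc_last, hsum R, Fin.val_last]
        have hfR : |f R| ≤ S * R ^ eT := by
          calc |f R| ≤ ∑ i : Fin (T + 1), |(σ * (-1) ^ (i : ℕ) * c i) * R ^ e i.castSucc| :=
                Finset.abs_sum_le_sum_abs _ _
            _ ≤ ∑ i : Fin (T + 1), c i * R ^ eT := by
                refine Finset.sum_le_sum fun i _ => ?_
                have h1 : |σ * (-1 : ℝ) ^ (i : ℕ)| = 1 := by
                  rcases hApm (i : ℕ) with h | h <;> rw [h] <;> norm_num
                rw [abs_mul, abs_mul, h1, one_mul, abs_of_pos (hc i),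
                  abs_of_pos (pow_pos hR0 _)]
                refine mul_le_mul_of_nonneg_left ?_ (hc i).le
                exact pow_le_pow_right₀ hR1
                  (he.monotone (Fin.castSucc_le_castSucc_iff.mpr (Fin.le_last i)))
            _ = S * R ^ eT := by rw [hS, Finset.sum_mul]
        have hpow : R ^ eT * R ≤ R ^ P := by
          calc R ^ eT * R = R ^ (eT + 1) := (pow_succ R eT).symm
            _ ≤ R ^ P := pow_le_pow_right₀ hR1 heTP
        have hSR : S < R * δ := (div_lt_iff₀ hδpos).1 hRS
        have hReT : 0 < R ^ eT := pow_pos hR0 _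
        rcases hApm (T + 1) with hB | hB <;> rw [hB]
        · have h2 : f R ≥ -(S * R ^ eT) := by
            have := neg_abs_le (f R); linarith
          nlinarith
        · have h2 : -(f R) ≥ -(S * R ^ eT) := by
            have := le_abs_self (f R); linarith
          nlinarith
      · -- old points
        intro i
        rw [Fin.snoc_castSucc, Fin.coe_castSucc, hsum (w i)]
        have h1 : ε ≤ (σ * (-1) ^ (i : ℕ)) * f (w i) := hεle i
        have h2 : 0 < w i ^ P := pow_pos (hwpos i) P
        have h3 : w i ^ P ≤ M := hMle i
        have hδwM : δ * w i ^ P ≤ ε / 2 := by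
          rw [← hδM]
          exact mul_le_mul_of_nonneg_left h3 hδpos.le
        rcases hApm (i : ℕ) with hA | hA <;> rcases hApm (T + 1) with hB | hB <;>
          rw [hA] at h1 ⊢ <;> rw [hB] <;> nlinarith
  

lemma ivt_root {f : ℝ → ℝ} (hf : Continuous f) {a b : ℝ} (hab : a < b)
    (h : f a * f b < 0) : ∃ x ∈ Set.Ioo a b, f x = 0 := by
  rcases lt_trichotomy (f a) 0 with h1 | h1 | h1
  · have h2 : 0 < f b := by nlinarith
    obtain ⟨x, hx, hx0⟩ := intermediate_value_Ioo hab.le hf.continuousOn ⟨h1, h2⟩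
    exact ⟨x, hx, hx0⟩
  · rw [h1, zero_mul] at h; exact absurd h (lt_irrefl 0)
  · have h2 : f b < 0 := by nlinarith
    obtain ⟨x, hx, hx0⟩ := intermediate_value_Ioo' hab.le hf.continuousOn ⟨h2, h1⟩
    exact ⟨x, hx, hx0⟩

lemma exists_pos_right {f : ℝ → ℝ} {d r b : ℝ} (hd : HasDerivAt f d r)
    (hdpos : 0 < d) (hfr : f r = 0) (hrb : r < b) :
    ∃ z, r < z ∧ z < b ∧ 0 < f z := by
  have hs := hasDerivAt_iff_tendsto_slope.mp hd
  have hmono : 𝓝[>] r ≤ 𝓝[≠] r :=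
    nhdsWithin_mono r (fun x hx => ne_of_gt hx)
  have h1 : ∀ᶠ z in 𝓝[>] r, 0 < slope f r z :=
    (hs.eventually (eventually_gt_nhds hdpos)).filter_mono hmono
  have h2 : ∀ᶠ z in 𝓝[>] r, z ∈ Set.Ioo r b :=
    eventually_of_mem (Ioo_mem_nhdsGT_of_mem ⟨le_refl r, hrb⟩) fun z hz => hz
  obtain ⟨z, hz1, hz2⟩ := (h1.and h2).exists
  refine ⟨z, hz2.1, hz2.2, ?_⟩
  rw [slope_def_field, hfr, sub_zero] at hz1
  rcases div_pos_iff.mp hz1 with ⟨h3, _⟩ | ⟨_, h4⟩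
  · exact h3
  · linarith [hz2.1]

lemma deriv_neg_aux {f : ℝ → ℝ} (hf : Continuous f) {d r a b : ℝ}
    (hd : HasDerivAt f d r) (har : a < r) (hrb : r < b)
    (hfa : 0 < f a) (hfb : f b < 0) (hfr : f r = 0) (hne : d ≠ 0)
    (huniq : ∀ y, a < y → y < b → f y = 0 → y = r) : d < 0 := by
  rcases hne.lt_or_gt with h | h
  · exact h
  · exfalso
    obtain ⟨z, hrz, hzb, hfz⟩ := exists_pos_right hd h hfr hrb
    obtain ⟨y, hy, hy0⟩ := ivt_root hf hzb (by nlinarith)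
    have hyr := huniq y (by linarith [hy.1]) hy.2 hy0
    linarith [hy.1]

lemma deriv_pos_aux {f : ℝ → ℝ} (hf : Continuous f) {d r a b : ℝ}
    (hd : HasDerivAt f d r) (har : a < r) (hrb : r < b)
    (hfa : f a < 0) (hfb : 0 < f b) (hfr : f r = 0) (hne : d ≠ 0)
    (huniq : ∀ y, a < y → y < b → f y = 0 → y = r) : 0 < d := by
  have := deriv_neg_aux (f := fun t => -f t) hf.neg hd.neg har hrb
    (by simpa using hfa) (by simpa using hfb) (by simp [hfr])
    (by simpa using hne) (fun y h1 h2 h3 => huniq y h1 h2 (by simpa using h3))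
  linarith


lemma sign_flip {u A B : ℝ} (hu : u * u = 1) (h1 : 0 < u * A) (h2 : A * B < 0) :
    0 < -u * B := by
  have hAne : A ≠ 0 := fun h0 => by rw [h0, zero_mul] at h2; exact lt_irrefl 0 h2
  have hA2 : 0 < A * A := mul_self_pos.mpr hAne
  nlinarith [mul_neg_of_pos_of_neg h1 h2]


end AltAux


open AltAux in
open Finset in
/-- Every `T`-alternating one-species network (reactions `mᵢA → nᵢA` with
`m₀ < m₁ < ⋯ < m_T` and strictly alternating arrow directions) admits, for
some positive rate constants, exactly `T` nondegenerate positive steady states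
`x₀ < x₁ < ⋯ < x_{T-1}`; when the arrow diagram starts with `→`
(`m₀ < n₀`) the `⌈T/2⌉` roots of even (0-based) index are exponentially stable
(derivative negative there), and when it starts with `←` (`n₀ < m₀`) the
`⌊T/2⌋` roots of odd index are exponentially stable. -/
theorem alternating_network_steady_states (T : ℕ)
    (m n : Fin (T + 1) → ℕ) (hm : StrictMono m) (hmn : ∀ i, m i ≠ n i)
    (halt : ∀ i : Fin T,
      ((n i.castSucc : ℤ) - m i.castSucc) * ((n i.succ : ℤ) - m i.succ) < 0) :
    ∃ κ : Fin (T + 1) → ℝ, (∀ i, 0 < κ i) ∧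
      ∃ x : Fin T → ℝ, StrictMono x ∧ (∀ i, 0 < x i) ∧
        (let p : ℝ → ℝ := fun t => ∑ i : Fin (T + 1), κ i * ((n i : ℝ) - m i) * t ^ (m i)
        (∀ i, p (x i) = 0) ∧
        (∀ i, deriv p (x i) ≠ 0) ∧
        (∀ y : ℝ, 0 < y → p y = 0 → ∃ i, y = x i) ∧
        (m 0 < n 0 → ∀ i : Fin T, i.val % 2 = 0 → deriv p (x i) < 0) ∧
        (n 0 < m 0 → ∀ i : Fin T, i.val % 2 = 1 → deriv p (x i) < 0)) := by

  set σ : ℝ := if m 0 < n 0 then 1 else -1 with hσdef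
  have hσ : σ = 1 ∨ σ = -1 := by
    rw [hσdef]; split <;> simp
  have hApm : ∀ k : ℕ, σ * (-1 : ℝ) ^ k = 1 ∨ σ * (-1 : ℝ) ^ k = -1 := by
    intro k
    have h2 : ((-1 : ℝ)) ^ k = 1 ∨ ((-1 : ℝ)) ^ k = -1 :=
      (Nat.even_or_odd k).imp (fun h => h.neg_one_pow) (fun h => h.neg_one_pow)
    rcases hσ with h | h <;> rcases h2 with h2 | h2 <;> rw [h, h2] <;> norm_num
  have hu2 : ∀ k : ℕ, (σ * (-1 : ℝ) ^ k) * (σ * (-1 : ℝ) ^ k) = 1 := by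
    intro k; rcases hApm k with h | h <;> rw [h] <;> norm_num
  -- sign alternation of n i - m i
  have hsgn : ∀ i : Fin (T + 1), 0 < σ * (-1) ^ (i : ℕ) * ((n i : ℝ) - (m i : ℝ)) := by
    intro i
    induction i using Fin.induction with
    | zero =>
      simp only [Fin.val_zero, pow_zero, mul_one]
      by_cases h : m 0 < n 0
      · rw [hσdef, if_pos h, one_mul]
        have : (m 0 : ℝ) < (n 0 : ℝ) := by exact_mod_cast h
        linarith
      · have h' : n 0 < m 0 := lt_of_le_of_ne (not_lt.mp h) (fun e => hmn 0 e.symm)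
        rw [hσdef, if_neg h]
        have : (n 0 : ℝ) < (m 0 : ℝ) := by exact_mod_cast h'
        nlinarith
    | succ i ih =>
      have hh := halt i
      have hh' : ((n i.castSucc : ℝ) - m i.castSucc) * ((n i.succ : ℝ) - m i.succ) < 0 := by
        exact_mod_cast hh
      rw [Fin.coe_castSucc] at ih
      have key := sign_flip (hu2 (i : ℕ)) ih hh'
      have heq : σ * (-1 : ℝ) ^ ((i.succ : Fin (T + 1)) : ℕ) * ((n i.succ : ℝ) - m i.succ)
          = -(σ * (-1) ^ (i : ℕ)) * ((n i.succ : ℝ) - m i.succ) := by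
        rw [Fin.val_succ, pow_succ]; ring
      rw [heq]; exact key
  obtain ⟨c, hc, w, hw, hwpos, hsign⟩ := construct σ hσ T m hm
  have hd0 : ∀ i : Fin (T + 1), (n i : ℝ) - (m i : ℝ) ≠ 0 := by
    intro i h0
    have := hsgn i; rw [h0, mul_zero] at this; exact lt_irrefl 0 this
  set κ : Fin (T + 1) → ℝ := fun i => c i / |(n i : ℝ) - (m i : ℝ)| with hκdef
  have hκpos : ∀ i, 0 < κ i := fun i => div_pos (hc i) (abs_pos.mpr (hd0 i))
  set a : Fin (T + 1) → ℝ := fun i => κ i * ((n i : ℝ) - (m i : ℝ)) with hadef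
  have hcoef : ∀ i, a i = σ * (-1) ^ (i : ℕ) * c i := by
    intro i
    set u : ℝ := σ * (-1) ^ (i : ℕ) with hudef
    set A : ℝ := (n i : ℝ) - (m i : ℝ) with hAdef
    have h1 : 0 < u * A := hsgn i
    have hu : u * u = 1 := hu2 (i : ℕ)
    have huabs : |u| = 1 := by rcases hApm (i : ℕ) with h | h <;> rw [hudef, h] <;> norm_num
    have habs : |A| = u * A := by
      rw [← abs_of_pos h1, abs_mul, huabs, one_mul]
    have huA : u * A ≠ 0 := ne_of_gt h1
    show c i / |A| * A = u * c i
    rw [habs]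
    rw [div_mul_eq_mul_div, div_eq_iff huA]
    linear_combination (-(c i * A)) * hu
  have hane : ∀ i, a i ≠ 0 := by
    intro i
    rw [hcoef i]
    rcases hApm (i : ℕ) with h | h <;> rw [h] <;>
      [exact ne_of_gt (by linarith [hc i]); exact ne_of_lt (by linarith [hc i])]
  set f : ℝ → ℝ := fun t => ∑ i : Fin (T + 1), a i * t ^ (m i) with hfdef
  have hfc : Continuous f := sum_continuous m a
  have hsignf : ∀ j : Fin (T + 1), 0 < σ * (-1) ^ (j : ℕ) * f (w j) := by
    intro j
    have heq : f (w j) = ∑ i : Fin (T + 1), (σ * (-1) ^ (i : ℕ) * c i) * w j ^ m i :=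
      Finset.sum_congr rfl fun i _ => by rw [hcoef i]
    rw [heq]; exact hsign j
  have hsucc : ∀ (k : ℕ) (B : ℝ), σ * (-1 : ℝ) ^ (k + 1) * B = -(σ * (-1) ^ k) * B := by
    intro k B; rw [pow_succ]; ring
  -- roots via IVT
  have hroots : ∀ j : Fin T, ∃ x ∈ Set.Ioo (w j.castSucc) (w j.succ), f x = 0 := by
    intro j
    have hwj : w j.castSucc < w j.succ := hw (Fin.castSucc_lt_succ : j.castSucc < j.succ)
    have a1 := hsignf j.castSucc
    have a2 := hsignf j.succ
    rw [Fin.coe_castSucc] at a1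
    rw [Fin.val_succ, hsucc] at a2
    refine ivt_root hfc hwj ?_
    rcases hApm (j : ℕ) with h | h <;> rw [h] at a1 a2 <;> nlinarith
  choose x hxIoo hx0 using hroots
  have hxmono : StrictMono x := by
    intro i j hij
    calc x i < w i.succ := (hxIoo i).2
      _ ≤ w j.castSucc := hw.monotone (by
          simp only [Fin.le_def, Fin.val_succ, Fin.coe_castSucc]; exact hij)
      _ < x j := (hxIoo j).1
  have hxpos : ∀ j, 0 < x j := fun j => lt_trans (hwpos _) (hxIoo j).1
  -- exactness
  have huniq_global : ∀ y : ℝ, 0 < y → f y = 0 → ∃ i, y = x i := by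
    intro y hy hy0
    by_contra hcon
    push_neg at hcon
    refine no_roots' T m a hm hane (Fin.cons y x) ?_ ?_ ?_
    · rw [Fin.cons_injective_iff]
      exact ⟨fun ⟨i, hi⟩ => hcon i hi.symm, hxmono.injective⟩
    · intro i
      refine Fin.cases hy (fun j => hxpos j) i
    · intro i
      refine Fin.cases hy0 (fun j => hx0 j) i
  -- derivative
  set Df : ℝ → ℝ := fun t => ∑ i : Fin (T + 1), a i * ((m i : ℝ) * t ^ (m i - 1)) with hDfdef
  have hDf : ∀ t, HasDerivAt f (Df t) t := fun t => sum_hasDerivAt m a t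
  -- nondegeneracy
  have hder : ∀ j : Fin T, Df (x j) ≠ 0 := by
    intro j hcon
    have hT : T ≠ 0 := fun h => (h ▸ j).elim0
    obtain ⟨S, rfl⟩ : ∃ S, T = S + 1 := ⟨T - 1, by omega⟩
    set g : ℝ → ℝ := fun t => ∑ i : Fin (S + 2), a i * t ^ (m i - m 0) with hgdef
    set h : ℝ → ℝ := fun t =>
      ∑ i : Fin (S + 1), (a i.succ * ((m i.succ - m 0 : ℕ) : ℝ)) * t ^ (m i.succ - m 0 - 1)
      with hhdef
    have hfg : ∀ t : ℝ, f t = t ^ (m 0) * g t :=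
      fun t => f_eq_pow_mul_g m a (m 0) (fun j => hm.monotone (Fin.zero_le j)) t
    have hgd : ∀ t, HasDerivAt g (h t) t := fun t => g_hasDerivAt m a t
    have hgroot : ∀ i, g (x i) = 0 := by
      intro i
      have h1 := hx0 i
      rw [hfg (x i)] at h1
      exact (mul_eq_zero.1 h1).resolve_left (pow_ne_zero _ (ne_of_gt (hxpos i)))
    -- h (x j) = 0
    have hhxj : h (x j) = 0 := by
      have hprod : HasDerivAt f ((m 0 : ℝ) * x j ^ (m 0 - 1) * g (x j)
          + x j ^ (m 0) * h (x j)) (x j) := by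
        have := (hasDerivAt_pow (m 0) (x j)).mul (hgd (x j))
        exact this.congr_of_eventuallyEq (by
          filter_upwards with t
          rw [hfg t]; rfl)
      have huniqd := (hDf (x j)).unique hprod
      rw [hgroot j, mul_zero, zero_add] at huniqd
      rw [hcon] at huniqd
      exact (mul_eq_zero.1 huniqd.symm).resolve_left (pow_ne_zero _ (ne_of_gt (hxpos j)))
    -- Rolle roots of g between consecutive x's
    have hroll : ∀ i : Fin S, ∃ y ∈ Set.Ioo (x i.castSucc) (x i.succ), h y = 0 := by
      intro i
      have hlt : x i.castSucc < x i.succ := hxmono (Fin.castSucc_lt_succ : i.castSucc < i.succ)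
      obtain ⟨cc, hcc, hcc0⟩ := exists_deriv_eq_zero hlt
        ((sum_continuous (fun i => m i - m 0) a).continuousOn)
        ((hgroot i.castSucc).trans (hgroot i.succ).symm)
      exact ⟨cc, hcc, by rw [← (hgd cc).deriv]; exact hcc0⟩
    choose y hyIoo hy0 using hroll
    have hymono : StrictMono y := by
      intro i j' hij
      calc y i < x i.succ := (hyIoo i).2
        _ ≤ x j'.castSucc := hxmono.monotone (by
            simp only [Fin.le_def, Fin.val_succ, Fin.coe_castSucc]; exact hij)
        _ < y j' := (hyIoo j').1
    refine no_roots' S (fun i => m i.succ - m 0 - 1)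
      (fun i => a i.succ * ((m i.succ - m 0 : ℕ) : ℝ)) ?_ ?_ (Fin.cons (x j) y) ?_ ?_ ?_
    · intro i j' hij
      show m i.succ - m 0 - 1 < m j'.succ - m 0 - 1
      have h1 : m 0 < m i.succ := hm (Fin.succ_pos i)
      have h2 : m i.succ < m j'.succ := hm (by simpa using hij)
      omega
    · intro i
      refine mul_ne_zero (hane _) (Nat.cast_ne_zero.mpr ?_)
      have : m 0 < m i.succ := hm (Fin.succ_pos i)
      omega
    · rw [Fin.cons_injective_iff]
      refine ⟨?_, hymono.injective⟩
      rintro ⟨i, hi⟩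
      have h1 : x i.castSucc < x j := hi ▸ (hyIoo i).1
      have h2 : x j < x i.succ := hi ▸ (hyIoo i).2
      have h3 := hxmono.lt_iff_lt.mp h1
      have h4 := hxmono.lt_iff_lt.mp h2
      rw [Fin.lt_def] at h3 h4
      simp only [Fin.coe_castSucc, Fin.val_succ] at h3 h4
      omega
    · intro i
      refine Fin.cases (hxpos j) (fun i' => lt_trans (hxpos _) (hyIoo i').1) i
    · intro i
      refine Fin.cases hhxj (fun i' => hy0 i') i
  -- local uniqueness of roots in each window
  have huniq_local : ∀ j : Fin T, ∀ y : ℝ,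
      w j.castSucc < y → y < w j.succ → f y = 0 → y = x j := by
    intro j y h1 h2 h3
    obtain ⟨i, rfl⟩ := huniq_global y (lt_trans (hwpos _) h1) h3
    rcases lt_trichotomy i j with hij | hij | hij
    · exfalso
      have : x i < w i.succ := (hxIoo i).2
      have hle : w i.succ ≤ w j.castSucc := hw.monotone (by
        simp only [Fin.le_def, Fin.val_succ, Fin.coe_castSucc]; exact hij)
      linarith
    · rw [hij]
    · exfalso
      have : w i.castSucc < x i := (hxIoo i).1
      have hle : w j.succ ≤ w i.castSucc := hw.monotone (by
        simp only [Fin.le_def, Fin.val_succ, Fin.coe_castSucc]; exact hij)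
      linarith
  -- stability: derivative negative when local sign is "+ then -"
  have hstab : ∀ j : Fin T, σ * (-1) ^ (j : ℕ) = 1 → Df (x j) < 0 := by
    intro j hj
    have a1 := hsignf j.castSucc
    have a2 := hsignf j.succ
    rw [Fin.coe_castSucc, hj, one_mul] at a1
    rw [Fin.val_succ, hsucc, hj] at a2
    have a2' : f (w j.succ) < 0 := by linarith
    exact deriv_neg_aux hfc (hDf (x j)) (hxIoo j).1 (hxIoo j).2 a1 a2' (hx0 j)
      (hder j) (huniq_local j)
  refine ⟨κ, hκpos, x, hxmono, hxpos, ?_, ?_, ?_, ?_, ?_⟩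
  · exact fun i => hx0 i
  · intro i
    show deriv f (x i) ≠ 0
    rw [(hDf (x i)).deriv]
    exact hder i
  · exact fun y hy hy0 => huniq_global y hy hy0
  · intro hmn0 i hi
    show deriv f (x i) < 0
    rw [(hDf (x i)).deriv]
    refine hstab i ?_
    have hσ1 : σ = 1 := by rw [hσdef, if_pos hmn0]
    have : ((-1 : ℝ)) ^ (i : ℕ) = 1 := Even.neg_one_pow (Nat.even_iff.mpr hi)
    rw [hσ1, this, one_mul]
  · intro hnm0 i hi
    show deriv f (x i) < 0
    rw [(hDf (x i)).deriv]
    refine hstab i ?_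
    have hσ1 : σ = -1 := by rw [hσdef, if_neg (by omega : ¬ m 0 < n 0)]
    have : ((-1 : ℝ)) ^ (i : ℕ) = -1 := Odd.neg_one_pow (Nat.odd_iff.mpr hi)
    rw [hσ1, this]; norm_num
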